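/- arXiv:1005.0160 — 3 statements merged into one kernel-verified Lean document; each statement's English description precedes it below -/
import Mathlib

section
/- Let Θ be a subinterval of ℝ with left endpoint θ₋ and let g : [0,∞) × Θ → ℝ satisfy the Spence–Mirrlees condition. Suppose v : Θ → ℝ is g-convex, i.e. v(θ) = sup_{x ≥ 0}(g(x,θ) − v^g(x)) for all θ ∈ Θ, where v^g(x) = sup_{θ∈Θ}(g(x,θ) − v(θ)). Let ψ : [0,∞) → ℝ ∪ {+∞} satisfy ψ^g = v on Θ, where ψ^g(θ) = sup_{x ≥ 0}(g(x,θ) − ψ(x)), and for θ ∈ Θ set A(θ) = { x ≥ 0 : g(x,θ) − ψ(x) = v(θ) }. Then: (i) A(θ) ⊆ ∂^g v(θ) = { x ≥ 0 : v(θ) + v^g(x) = g(x,θ) } for every θ ∈ Θ; (ii) for every x ∈ A(θ), ψ(x) = v^g(x); (iii) if in addition x ↦ g(x,θ) − ψ(x) is upper semicontinuous for each θ ∈ Θ, then A(θ) ≠ ∅ for every θ ∈ Θ such that there exists θ̃ ∈ Θ with θ̃ > θ and A(θ̃) ≠ ∅. -/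
open Set Filter Topology




/-- The Spence–Mirrlees condition for `g = g(x,θ)` on `Dx × Dθ`. -/
def SpenceMirrlees (Dx Dθ : Set ℝ) (g : ℝ → ℝ → ℝ) : Prop :=
  ContDiff ℝ 2 (Function.uncurry g) ∧
  (∀ x ∈ Dx, StrictMonoOn (fun θ => deriv (fun x' => g x' θ) x) Dθ) ∧
  (∀ θ ∈ Dθ, StrictMonoOn (fun x => deriv (fun θ' => g x θ') θ) Dx)

/-- `v^g(x) = sup_{θ ∈ Θ}(g(x,θ) - v(θ))`, the `g`-convex dual of `v : Θ → ℝ`. -/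
noncomputable def gDualV (Θ : Set ℝ) (g : ℝ → ℝ → ℝ) (v : ℝ → ℝ) (x : ℝ) : EReal :=
  ⨆ θ ∈ Θ, ((g x θ : EReal) - (v θ : EReal))

/-- `w^g(θ) = sup_{x ≥ 0}(g(x,θ) - w(x))`, the `g`-convex dual of `w : [0,∞) → ℝ∪{+∞}`. -/
noncomputable def gDualW (g : ℝ → ℝ → ℝ) (w : ℝ → EReal) (θ : ℝ) : EReal :=
  ⨆ x ∈ Ici (0:ℝ), ((g x θ : EReal) - w x)

/-- `v` is `g`-convex on `Θ` if `(v^g)^g = v` there. -/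
def GConvex (Θ : Set ℝ) (g : ℝ → ℝ → ℝ) (v : ℝ → ℝ) : Prop :=
  ∀ θ ∈ Θ, (v θ : EReal) = ⨆ x ∈ Ici (0:ℝ), ((g x θ : EReal) - gDualV Θ g v x)

/-- The `g`-subdifferential `∂^g v(θ) = { x ≥ 0 : v(θ) + v^g(x) = g(x,θ) }`. -/
def gSubdiff (Θ : Set ℝ) (g : ℝ → ℝ → ℝ) (v : ℝ → ℝ) (θ : ℝ) : Set ℝ :=
  {x | 0 ≤ x ∧ (v θ : EReal) + gDualV Θ g v x = (g x θ : EReal)}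


lemma ereal_cases (a : EReal) : a = ⊥ ∨ a = ⊤ ∨ ∃ p : ℝ, a = p := by
  induction a with
  | bot => exact Or.inl rfl
  | coe p => exact Or.inr (Or.inr ⟨p, rfl⟩)
  | top => exact Or.inr (Or.inl rfl)

/-- A USC EReal-valued function attains its max on a nonempty compact closed set. -/
lemma usc_exists_max {K : Set ℝ} (hK : IsCompact K) (hKcl : IsClosed K) (hne : K.Nonempty)
    {F : ℝ → EReal} (hF : UpperSemicontinuousOn F K) :
    ∃ x₀ ∈ K, ∀ x ∈ K, F x ≤ F x₀ := by
  have hclosed : ∀ a : EReal, IsClosed {x | x ∈ K ∧ a ≤ F x} := by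
    intro a
    apply isClosed_of_closure_subset
    intro z hz
    have hsubK : {x | x ∈ K ∧ a ≤ F x} ⊆ K := fun x hx => hx.1
    have hzK : z ∈ K := hKcl.closure_subset_iff.mpr hsubK hz
    refine ⟨hzK, ?_⟩
    by_contra h
    have hlt : F z < a := lt_of_not_ge h
    have h1 : ∀ᶠ x in 𝓝[K] z, F x < a := hF z hzK a hlt
    have hnb : (𝓝[{x | x ∈ K ∧ a ≤ F x}] z).NeBot :=
      mem_closure_iff_nhdsWithin_neBot.mp hz
    have h2 : ∀ᶠ x in 𝓝[{x | x ∈ K ∧ a ≤ F x}] z, F x < a :=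
      h1.filter_mono (nhdsWithin_mono _ hsubK)
    have h3 : ∀ᶠ x in 𝓝[{x | x ∈ K ∧ a ≤ F x}] z, a ≤ F x :=
      eventually_mem_nhdsWithin.mono fun x hx => hx.2
    obtain ⟨x, hx1, hx2⟩ := (h2.and h3).exists
    exact absurd hx2 (not_le.mpr hx1)
  set S := ⨆ x ∈ K, F x with hS
  by_cases hSbot : S = ⊥
  · obtain ⟨x₀, hx₀⟩ := hne
    refine ⟨x₀, hx₀, fun x hx => ?_⟩
    have : F x ≤ S := le_biSup F hx
    rw [hSbot, le_bot_iff] at this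
    simp [this]
  · have hbot : (⊥ : EReal) < S := bot_lt_iff_ne_bot.mpr hSbot
    have : Nonempty {a : EReal // a < S} := ⟨⟨⊥, hbot⟩⟩
    set Z : {a : EReal // a < S} → Set ℝ := fun a => {x | x ∈ K ∧ a.1 ≤ F x} with hZ
    have hZne : ∀ a, (Z a).Nonempty := by
      rintro ⟨a, ha⟩
      rw [hS, lt_iSup_iff] at ha
      obtain ⟨x, hx⟩ := ha
      rw [lt_iSup_iff] at hx
      obtain ⟨hxK, hlt⟩ := hx
      exact ⟨x, hxK, hlt.le⟩
    have hZd : Directed (· ⊇ ·) Z := by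
      rintro ⟨a, ha⟩ ⟨b, hb⟩
      refine ⟨⟨max a b, max_lt ha hb⟩, ?_, ?_⟩
      · exact fun x hx => ⟨hx.1, le_trans (le_max_left a b) hx.2⟩
      · exact fun x hx => ⟨hx.1, le_trans (le_max_right a b) hx.2⟩
    have hZc : ∀ a, IsCompact (Z a) := fun a =>
      hK.of_isClosed_subset (hclosed a.1) (fun x hx => hx.1)
    obtain ⟨x₀, hx₀⟩ :=
      IsCompact.nonempty_iInter_of_directed_nonempty_isCompact_isClosed Z hZd hZne hZc
        (fun a => hclosed a.1)
    simp only [mem_iInter] at hx₀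
    have hx₀K : x₀ ∈ K := (hx₀ ⟨⊥, hbot⟩).1
    refine ⟨x₀, hx₀K, fun x hx => ?_⟩
    have hSle : S ≤ F x₀ := le_of_forall_lt_imp_le_of_dense fun a ha => (hx₀ ⟨a, ha⟩).2
    exact le_trans (le_biSup F hx) hSle

/-- From Spence–Mirrlees, `x ↦ g x θ - g x θ'` is strictly decreasing on `[0,∞)` when
`θ < θ'` in `Θ`. -/
lemma sm_strictAntiOn {Θ : Set ℝ} {g : ℝ → ℝ → ℝ} (hSM : SpenceMirrlees (Ici 0) Θ g)
    {θ θ' : ℝ} (hθ : θ ∈ Θ) (hθ' : θ' ∈ Θ) (hlt : θ < θ') :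
    StrictAntiOn (fun x => g x θ - g x θ') (Ici 0) := by
  obtain ⟨hg, hSM1, -⟩ := hSM
  have hd : ∀ t : ℝ, Differentiable ℝ (fun x => g x t) := by
    intro t
    have : Differentiable ℝ (Function.uncurry g ∘ fun x : ℝ => (x, t)) :=
      (hg.differentiable two_ne_zero).comp (differentiable_id.prodMk (differentiable_const t))
    exact this
  apply strictAntiOn_of_deriv_neg (convex_Ici 0)
  · exact ((hd θ).continuous.sub (hd θ').continuous).continuousOn
  · intro x hx
    rw [interior_Ici] at hx
    rw [deriv_fun_sub ((hd θ) x) ((hd θ') x)]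
    have := hSM1 x (mem_Ici.mpr (le_of_lt hx)) hθ hθ' hlt
    linarith [this]


/-- Suppose `v` is `g`-convex and `ψ^g = v` on `Θ`; let
`A(θ) = { x ≥ 0 : g(x,θ) - ψ(x) = v(θ) }`. Then (i) `A(θ) ⊆ ∂^g v(θ)`;
(ii) `ψ = v^g` on `A(θ)`; and (iii) if `x ↦ g(x,θ) - ψ(x)` is upper semicontinuous for
each `θ ∈ Θ`, then `A(θ) ≠ ∅` whenever some `θ' ∈ Θ` with `θ' > θ` has `A(θ') ≠ ∅`. -/
theorem gSubdiff_of_attained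
    (Θ : Set ℝ) (hΘ : Θ.Nonempty) (hΘI : Θ.OrdConnected)
    (g : ℝ → ℝ → ℝ) (hSM : SpenceMirrlees (Ici 0) Θ g)
    (v : ℝ → ℝ) (hvconv : GConvex Θ g v)
    (ψ : ℝ → EReal) (hψg : ∀ θ ∈ Θ, gDualW g ψ θ = (v θ : EReal)) :
    (∀ θ ∈ Θ, ∀ x : ℝ, 0 ≤ x → (g x θ : EReal) - ψ x = (v θ : EReal) →
      x ∈ gSubdiff Θ g v θ) ∧
    (∀ θ ∈ Θ, ∀ x : ℝ, 0 ≤ x → (g x θ : EReal) - ψ x = (v θ : EReal) →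
      ψ x = gDualV Θ g v x) ∧
    ((∀ θ ∈ Θ, UpperSemicontinuousOn (fun x => (g x θ : EReal) - ψ x) (Ici 0)) →
      ∀ θ ∈ Θ, (∃ θ' ∈ Θ, θ < θ' ∧
          ∃ x' : ℝ, 0 ≤ x' ∧ (g x' θ' : EReal) - ψ x' = (v θ' : EReal)) →
        ∃ x : ℝ, 0 ≤ x ∧ (g x θ : EReal) - ψ x = (v θ : EReal)) := by
  obtain ⟨hub, hkey⟩ : (∀ θ ∈ Θ, ∀ x : ℝ, 0 ≤ x → (g x θ : EReal) - ψ x ≤ (v θ : EReal)) ∧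
      (∀ θ ∈ Θ, ∀ x : ℝ, 0 ≤ x → (g x θ : EReal) - ψ x = (v θ : EReal) →
        ∃ p : ℝ, ψ x = (p : EReal) ∧ p = g x θ - v θ ∧ gDualV Θ g v x = (p : EReal)) := by
    have hub : ∀ θ ∈ Θ, ∀ x : ℝ, 0 ≤ x → (g x θ : EReal) - ψ x ≤ (v θ : EReal) := by
      intro θ hθ x hx
      have := le_biSup (fun x => (g x θ : EReal) - ψ x) (show x ∈ Ici (0:ℝ) from hx)
      rw [← gDualW, hψg θ hθ] at this
      exact this
    refine ⟨hub, ?_⟩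
    intro θ hθ x hx heq
    -- ψ x is a real number
    obtain ⟨p, hp⟩ : ∃ p : ℝ, ψ x = (p : EReal) := by
      rcases ereal_cases (ψ x) with h | h | h
      · rw [h] at heq; simp at heq
      · rw [h] at heq; simp at heq
      · exact h
    rw [hp] at heq
    rw [show (g x θ : EReal) - (p : EReal) = ((g x θ - p : ℝ) : EReal) from rfl] at heq
    have hpv : g x θ - p = v θ := by exact_mod_cast heq
    have hpeq : p = g x θ - v θ := by linarith
    refine ⟨p, hp, hpeq, ?_⟩
    apply le_antisymm
    · apply iSup₂_le
      intro θ' hθ'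
      have h1 := hub θ' hθ' x hx
      rw [hp, show (g x θ' : EReal) - (p : EReal) = ((g x θ' - p : ℝ) : EReal) from rfl] at h1
      have h2 : g x θ' - p ≤ v θ' := by exact_mod_cast h1
      have h3 : g x θ' - v θ' ≤ p := by linarith
      calc (g x θ' : EReal) - (v θ' : EReal) = ((g x θ' - v θ' : ℝ) : EReal) := rfl
        _ ≤ (p : EReal) := by exact_mod_cast h3
    · have := le_biSup (fun θ' => (g x θ' : EReal) - (v θ' : EReal)) hθ
      refine le_trans ?_ this
      show (p : EReal) ≤ (g x θ : EReal) - (v θ : EReal)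
      rw [show (g x θ : EReal) - (v θ : EReal) = ((g x θ - v θ : ℝ) : EReal) from rfl]
      exact_mod_cast hpeq.le
  refine ⟨?_, ?_, ?_⟩
  · -- part (i)
    intro θ hθ x hx heq
    obtain ⟨p, hψp, hpeq, hdual⟩ := hkey θ hθ x hx heq
    refine ⟨hx, ?_⟩
    rw [hdual]
    rw [show (v θ : EReal) + (p : EReal) = ((v θ + p : ℝ) : EReal) from rfl]
    norm_cast
    linarith
  · -- part (ii)
    intro θ hθ x hx heq
    obtain ⟨p, hψp, _, hdual⟩ := hkey θ hθ x hx heq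
    rw [hψp, hdual]
  · -- part (iii)
    intro husc θ hθ ⟨θ', hθ', hlt, x', hx'0, hx'⟩
    obtain ⟨p', hψp', hp'eq, -⟩ := hkey θ' hθ' x' hx'0 hx'
    set F : ℝ → EReal := fun x => (g x θ : EReal) - ψ x with hF
    obtain ⟨x₀, hx₀K, hmax⟩ := usc_exists_max isCompact_Icc isClosed_Icc ⟨x', hx'0, le_refl x'⟩
      ((husc θ hθ).mono (fun x (hx : x ∈ Icc 0 x') => hx.1))
    have hanti := sm_strictAntiOn hSM hθ hθ' hlt
    -- F x' is a real value
    have hFx' : F x' = ((g x' θ - p' : ℝ) : EReal) := by rw [hF]; simp only; rw [hψp']; rfl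
    have hall : ∀ x : ℝ, 0 ≤ x → F x ≤ F x₀ := by
      intro x hx0
      rcases le_or_gt x x' with hle | hgt
      · exact hmax x ⟨hx0, hle⟩
      · -- x > x' : strict inequality F x < F x'
        have hx'le : F x' ≤ F x₀ := hmax x' ⟨hx'0, le_refl x'⟩
        refine le_trans ?_ hx'le
        rw [hFx']
        rcases ereal_cases (ψ x) with hψx | hψx | ⟨q, hψx⟩
        · exfalso
          have := hub θ' hθ' x hx0
          rw [hψx] at this
          simp at this
        · rw [hF]; simp only [hψx]
          simp
        · rw [hF]; simp only [hψx]
          rw [show (g x θ : EReal) - (q : EReal) = ((g x θ - q : ℝ) : EReal) from rfl]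
          have h1 := hub θ' hθ' x hx0
          rw [hψx, show (g x θ' : EReal) - (q : EReal) = ((g x θ' - q : ℝ) : EReal) from rfl] at h1
          have h2 : g x θ' - q ≤ v θ' := by exact_mod_cast h1
          have h3 : g x θ - g x θ' < g x' θ - g x' θ' := hanti hx'0 (le_trans hx'0 hgt.le) hgt
          have : g x θ - q ≤ g x' θ - p' := by
            rw [hp'eq]; linarith
          exact_mod_cast this
    refine ⟨x₀, hx₀K.1, le_antisymm (hub θ hθ x₀ hx₀K.1) ?_⟩
    rw [← hψg θ hθ]
    exact iSup₂_le fun x hx => hall x hx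
end

section
/- Let Θ be a subinterval of ℝ and let g : [0,∞) × Θ → ℝ satisfy the Spence–Mirrlees condition. Suppose v : Θ → ℝ is g-convex and that for every x ≥ 0 there exists θ ∈ Θ such that ∂^g v(θ) = {x} and such that there is θ̃ ∈ Θ with θ̃ > θ and ∂^g v(θ̃) ≠ ∅. Then v^g is the unique function consistent with v in the following sense: if ψ : [0,∞) → ℝ ∪ {+∞} satisfies ψ^g = v on Θ and x ↦ g(x,θ) − ψ(x) is upper semicontinuous for each θ ∈ Θ, then ψ(x) = v^g(x) for all x ≥ 0. -/
open Set

lemma aux1 (a c : ℝ) (b : EReal) : (a:EReal) - b ≤ (c:EReal) ↔ ((a - c : ℝ) : EReal) ≤ b := by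
  induction b using EReal.rec with
  | bot => simp [EReal.sub_bot]; exact fun h => EReal.coe_ne_bot (a-c) (by rw [EReal.coe_sub]; exact h)
  | coe r =>
    rw [show ((a:EReal) - (r:EReal)) = ((a - r : ℝ) : EReal) from (EReal.coe_sub a r).symm,
      EReal.coe_le_coe_iff, EReal.coe_le_coe_iff]
    constructor <;> intro <;> linarith
  | top => simp [EReal.sub_top]

lemma aux2 (a c : ℝ) (b : EReal) : (a:EReal) - b = (c:EReal) ↔ b = ((a - c : ℝ) : EReal) := by
  induction b using EReal.rec with
  | bot => simp [EReal.sub_bot]; exact fun h => EReal.coe_ne_bot (a-c) (by rw [EReal.coe_sub]; exact h.symm)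
  | coe r =>
    rw [show ((a:EReal) - (r:EReal)) = ((a - r : ℝ) : EReal) from (EReal.coe_sub a r).symm,
      EReal.coe_eq_coe_iff, EReal.coe_eq_coe_iff]
    constructor <;> intro <;> linarith
  | top => simp [EReal.sub_top]; exact fun h => EReal.coe_ne_top (a-c) (by rw [EReal.coe_sub]; exact h.symm)

lemma aux3 (a c : ℝ) (b : EReal) : (a:EReal) + b = (c:EReal) ↔ b = ((c - a : ℝ) : EReal) := by
  induction b using EReal.rec with
  | bot => simp; exact fun h => EReal.coe_ne_bot (c-a) (by rw [EReal.coe_sub]; exact h.symm)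
  | coe r =>
    rw [show ((a:EReal) + (r:EReal)) = ((a + r : ℝ) : EReal) from (EReal.coe_add a r).symm,
      EReal.coe_eq_coe_iff, EReal.coe_eq_coe_iff]
    constructor <;> intro <;> linarith
  | top => simp; exact fun h => EReal.coe_ne_top (c-a) (by rw [EReal.coe_sub]; exact h.symm)

lemma aux4 (a d : ℝ) (b : EReal) (hb : (d:EReal) ≤ b) :
    (a:EReal) - b ≤ ((a - d : ℝ):EReal) := (aux1 a (a - d) b).mpr (by
  rw [show a - (a - d) = d by ring]; exact hb)

/-- Suppose `v` is `g`-convex, and for every `x ≥ 0` there is `θ ∈ Θ` with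
`∂^g v(θ) = {x}` and with some `θ' ∈ Θ`, `θ' > θ`, having nonempty `g`-subdifferential.
Then any `ψ` with `ψ^g = v` on `Θ` and `x ↦ g(x,θ) - ψ(x)` upper semicontinuous for
each `θ ∈ Θ` satisfies `ψ = v^g` on `[0,∞)`. -/
theorem unique_dual_of_singleton_subdiff
    (Θ : Set ℝ) (hΘ : Θ.Nonempty) (hΘI : Θ.OrdConnected)
    (g : ℝ → ℝ → ℝ) (hSM : SpenceMirrlees (Ici 0) Θ g)
    (v : ℝ → ℝ) (hvconv : GConvex Θ g v)
    (hrange : ∀ x : ℝ, 0 ≤ x → ∃ θ ∈ Θ, gSubdiff Θ g v θ = {x} ∧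
      ∃ θ' ∈ Θ, θ < θ' ∧ (gSubdiff Θ g v θ').Nonempty) :
    ∀ ψ : ℝ → EReal,
      (∀ θ ∈ Θ, gDualW g ψ θ = (v θ : EReal)) →
      (∀ θ ∈ Θ, UpperSemicontinuousOn (fun x => (g x θ : EReal) - ψ x) (Ici 0)) →
      ∀ x : ℝ, 0 ≤ x → ψ x = gDualV Θ g v x := by
  classical
  intro ψ hψ husc x hx
  open Filter Topology in
  -- `ψ` dominates each term `g(y,θ) - v(θ)`
  have hterm : ∀ y : ℝ, 0 ≤ y → ∀ t ∈ Θ, ((g y t - v t : ℝ) : EReal) ≤ ψ y := by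
    intro y hy t ht
    have h1 : (g y t : EReal) - ψ y ≤ (v t : EReal) := by
      rw [← hψ t ht]
      exact le_iSup₂ (f := fun z (_ : z ∈ Ici (0:ℝ)) => (g z t : EReal) - ψ z) y hy
    exact (aux1 _ _ _).mp h1
  have hge : ∀ y : ℝ, 0 ≤ y → gDualV Θ g v y ≤ ψ y := by
    intro y hy
    exact iSup₂_le fun t ht => by
      rw [← EReal.coe_sub]; exact hterm y hy t ht
  obtain ⟨θ, hθ, hsing, θ', hθ', hltθ, x', hx'mem⟩ := hrange x hx
  obtain ⟨hx'0, hx'eq⟩ := hx'mem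
  -- `gDualV x'` is the real number `g x' θ' - v θ'`
  have hdV : gDualV Θ g v x' = ((g x' θ' - v θ' : ℝ) : EReal) := (aux3 _ _ _).mp hx'eq
  -- key real inequality: g x' θ - g x' θ' + v θ' ≤ v θ
  have hkey : g x' θ - g x' θ' + v θ' ≤ v θ := by
    have h1 : ((g x' θ - v θ : ℝ) : EReal) ≤ gDualV Θ g v x' := by
      rw [EReal.coe_sub]
      exact le_iSup₂ (f := fun t (_ : t ∈ Θ) => (g x' t : EReal) - (v t : EReal)) θ hθ
    rw [hdV, EReal.coe_le_coe_iff] at h1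
    linarith
  -- the auxiliary strictly decreasing function
  set h : ℝ → ℝ := fun y => g y θ - g y θ' + v θ' with hhdef
  have hdiffg : ∀ t : ℝ, Differentiable ℝ (fun y => g y t) := fun t =>
    (hSM.1.differentiable (by norm_num)).comp (differentiable_id.prodMk (differentiable_const t))
  have hderivh : ∀ y : ℝ, deriv h y =
      deriv (fun y' => g y' θ) y - deriv (fun y' => g y' θ') y := by
    intro y
    have : h = fun y => (g y θ - g y θ') + v θ' := rfl
    rw [this, deriv_add_const, deriv_fun_sub ((hdiffg θ) y) ((hdiffg θ') y)]
  have hanti : StrictAntiOn h (Ici (0:ℝ)) := by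
    apply strictAntiOn_of_deriv_neg (convex_Ici 0)
    · exact (((hdiffg θ).continuous.sub (hdiffg θ').continuous).add continuous_const).continuousOn
    · intro y hy
      rw [interior_Ici] at hy
      have := (hSM.2.1 y (mem_Ici.mpr (le_of_lt hy))) hθ hθ' hltθ
      rw [hderivh y]
      simpa using sub_neg.mpr this
  set X : ℝ := x' + 1 with hXdef
  have hX0 : (0:ℝ) ≤ X := by linarith
  have hbv : h X < v θ := by
    have h1 : h X < h x' := hanti hx'0 hX0 (by simp only [hXdef]; linarith)
    calc h X < h x' := h1
    _ ≤ v θ := hkey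
  -- tail bound: for y ≥ 0, g(y,θ) - ψ(y) ≤ h(y)
  have htail : ∀ y : ℝ, 0 ≤ y → (g y θ : EReal) - ψ y ≤ ((h y : ℝ) : EReal) := by
    intro y hy
    have h1 : ((g y θ' - v θ' : ℝ) : EReal) ≤ ψ y := hterm y hy θ' hθ'
    have := aux4 (g y θ) (g y θ' - v θ') (ψ y) h1
    convert this using 2
    simp only [hhdef]; ring
  have hsup : gDualW g ψ θ = (v θ : EReal) := hψ θ hθ
  -- the maximizing sequence
  have hseq : ∀ n : ℕ, ∃ y : ℝ, 0 ≤ y ∧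
      ((max (h X) (v θ - 1/(n+1)) : ℝ) : EReal) < (g y θ : EReal) - ψ y := by
    intro n
    have hc : ((max (h X) (v θ - 1/(n+1)) : ℝ) : EReal) < (v θ : EReal) := by
      apply EReal.coe_lt_coe_iff.mpr
      apply max_lt hbv
      have : (0:ℝ) < 1/(n+1) := by positivity
      linarith
    rw [← hsup] at hc
    unfold gDualW at hc
    rw [lt_iSup_iff] at hc
    obtain ⟨y, hy⟩ := hc
    rw [lt_iSup_iff] at hy
    obtain ⟨hy0, hy⟩ := hy
    exact ⟨y, hy0, hy⟩
  choose y hy0 hylt using hseq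
  -- the sequence stays in [0, X]
  have hyle : ∀ n : ℕ, y n ≤ X := by
    intro n
    by_contra hgt
    push_neg at hgt
    have h1 : h (y n) < h X := hanti hX0 (le_trans hX0 (le_of_lt hgt)) hgt
    have h2 : (g (y n) θ : EReal) - ψ (y n) ≤ ((h (y n) : ℝ) : EReal) := htail (y n) (hy0 n)
    have h3 : ((h (y n) : ℝ) : EReal) < ((max (h X) (v θ - 1/(n+1)) : ℝ) : EReal) := by
      apply EReal.coe_lt_coe_iff.mpr
      exact lt_of_lt_of_le h1 (le_max_left _ _)
    exact absurd (hylt n) (not_lt.mpr (le_of_lt (lt_of_le_of_lt h2 h3)))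
  obtain ⟨xs, hxsmem, φ, hφ, hconv⟩ :=
    (isCompact_Icc (a := (0:ℝ)) (b := X)).tendsto_subseq (fun n => ⟨hy0 n, hyle n⟩)
  have hxs0 : (0:ℝ) ≤ xs := hxsmem.1
  -- f xs ≤ v θ
  have hle : (g xs θ : EReal) - ψ xs ≤ (v θ : EReal) := by
    rw [← hsup]
    exact le_iSup₂ (f := fun z (_ : z ∈ Ici (0:ℝ)) => (g z θ : EReal) - ψ z) xs hxs0
  -- f xs = v θ
  have feq : (g xs θ : EReal) - ψ xs = (v θ : EReal) := by
    rcases lt_or_eq_of_le hle with hltv | hev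
    · exfalso
      obtain ⟨c', hc1, hc2⟩ := exists_between hltv
      have hev1 : ∀ᶠ z in 𝓝[Ici (0:ℝ)] xs, (g z θ : EReal) - ψ z < c' :=
        husc θ hθ xs hxs0 c' hc1
      have htend : Tendsto (y ∘ φ) atTop (𝓝[Ici (0:ℝ)] xs) :=
        tendsto_nhdsWithin_of_tendsto_nhds_of_eventually_within _ hconv
          (Eventually.of_forall fun n => hy0 (φ n))
      have hev1' : ∀ᶠ n in atTop, (g (y (φ n)) θ : EReal) - ψ (y (φ n)) < c' :=
        htend.eventually hev1
      have htend2 : Tendsto (fun n : ℕ => ((v θ - 1/(φ n+1) : ℝ) : EReal)) atTop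
          (𝓝 ((v θ : ℝ) : EReal)) := by
        apply EReal.tendsto_coe.mpr
        have h0 : Tendsto (fun n : ℕ => 1/((n:ℝ)+1)) atTop (𝓝 0) :=
          tendsto_one_div_add_atTop_nhds_zero_nat
        have h1 : Tendsto (fun n : ℕ => 1/((φ n:ℝ)+1)) atTop (𝓝 0) :=
          h0.comp hφ.tendsto_atTop
        have := (tendsto_const_nhds (x := v θ) (f := atTop (α := ℕ))).sub h1
        simpa using this
      have hev2 : ∀ᶠ n in atTop, c' < ((v θ - 1/(φ n+1) : ℝ) : EReal) :=
        htend2.eventually_const_lt hc2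
      obtain ⟨n, hn1, hn2⟩ := (hev1'.and hev2).exists
      have h3 : ((v θ - 1/(φ n+1) : ℝ) : EReal) ≤
          ((max (h X) (v θ - 1/(φ n+1)) : ℝ) : EReal) :=
        EReal.coe_le_coe_iff.mpr (le_max_right _ _)
      exact absurd (hylt (φ n)) (not_lt.mpr (le_of_lt (lt_trans hn1 (lt_of_lt_of_le hn2 h3))))
    · exact hev
  have hψxs : ψ xs = ((g xs θ - v θ : ℝ) : EReal) := (aux2 _ _ _).mp feq
  have hdVxs : gDualV Θ g v xs = ((g xs θ - v θ : ℝ) : EReal) := by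
    apply le_antisymm
    · rw [← hψxs]; exact hge xs hxs0
    · rw [EReal.coe_sub]
      exact le_iSup₂ (f := fun t (_ : t ∈ Θ) => (g xs t : EReal) - (v t : EReal)) θ hθ
  have hxsmem' : xs ∈ gSubdiff Θ g v θ := by
    refine ⟨hxs0, ?_⟩
    rw [hdVxs, ← EReal.coe_add, EReal.coe_eq_coe_iff]
    ring
  have hxseq : xs = x := by
    rw [hsing] at hxsmem'
    exact hxsmem'
  rw [← hxseq, hψxs, hdVxs]
end

section
/- Let Θ be a subinterval of ℝ and let g : [0,∞) × Θ → ℝ satisfy the Spence–Mirrlees condition. Suppose v : Θ → ℝ is g-convex, v is continuously differentiable on the interval (θ₋, θ_R) where θ_R = sup{θ ∈ Θ : ∂^g v(θ) ≠ ∅} and θ₋ is the left endpoint of Θ, the g-subdifferential ∂^g v(θ) is nonempty for every θ ∈ (θ₋, θ_R), and the selections x*(θ) ∈ ∂^g v(θ) satisfy lim_{θ↓θ₋} x*(θ) = 0 and lim_{θ↑θ_R} x*(θ) = ∞. Then there is at most one function ψ : [0,∞) → ℝ ∪ {+∞} with ψ(0) = 0, x ↦ g(x,θ) − ψ(x) upper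 semicontinuous for each θ ∈ Θ, and ψ^g = v on Θ, namely ψ = v^g. -/
open Set
open Filter Topology

lemma aux_gDualV_eq (Θ : Set ℝ) (g : ℝ → ℝ → ℝ) (v : ℝ → ℝ) (x : ℝ) :
    gDualV Θ g v x = ⨆ θ ∈ Θ, (((g x θ - v θ : ℝ)) : EReal) := by
  unfold gDualV
  refine iSup_congr fun θ => iSup_congr fun _ => ?_
  rw [EReal.coe_sub]

lemma aux_le_gDualV {Θ : Set ℝ} (g : ℝ → ℝ → ℝ) (v : ℝ → ℝ) {θ : ℝ} (hθ : θ ∈ Θ) (x : ℝ) :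
    (((g x θ - v θ : ℝ)) : EReal) ≤ gDualV Θ g v x := by
  rw [aux_gDualV_eq]
  exact le_iSup₂ (f := fun θ _ => (((g x θ - v θ : ℝ)) : EReal)) θ hθ

lemma aux_gDualV_lsc (Θ : Set ℝ) {g : ℝ → ℝ → ℝ} (hg : Continuous (Function.uncurry g))
    (v : ℝ → ℝ) : LowerSemicontinuous (gDualV Θ g v) := by
  have hfe : gDualV Θ g v = fun x => ⨆ θ : Θ, (((g x θ - v θ : ℝ)) : EReal) := by
    funext x; rw [aux_gDualV_eq, iSup_subtype']
  rw [hfe]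
  apply lowerSemicontinuous_iSup
  intro θ
  apply Continuous.lowerSemicontinuous
  exact continuous_coe_real_ereal.comp ((hg.comp (continuous_id.prodMk continuous_const)).sub continuous_const)

lemma aux_gSubdiff_eval {Θ : Set ℝ} {g : ℝ → ℝ → ℝ} {v : ℝ → ℝ} {θ x : ℝ}
    (h : x ∈ gSubdiff Θ g v θ) : gDualV Θ g v x = (((g x θ - v θ : ℝ)) : EReal) := by
  obtain ⟨hx, he⟩ := h
  have hbot : gDualV Θ g v x ≠ ⊥ := by
    intro hb; rw [hb] at he; simp at he
  have htop : gDualV Θ g v x ≠ ⊤ := by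
    intro hb; rw [hb] at he; simp at he
  have hr : ((gDualV Θ g v x).toReal : EReal) = gDualV Θ g v x := EReal.coe_toReal htop hbot
  rw [← hr] at he ⊢
  rw [← EReal.coe_add] at he
  have : v θ + (gDualV Θ g v x).toReal = g x θ := by exact_mod_cast he
  have : (gDualV Θ g v x).toReal = g x θ - v θ := by linarith
  exact_mod_cast this

lemma aux_ereal_sub_le {a c : ℝ} {b : EReal} (hb : b ≠ ⊥) (h : (a:EReal) - b ≤ (c:EReal)) :
    (((a - c : ℝ)) : EReal) ≤ b := by
  induction b with
  | bot => simp at hb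
  | coe r =>
    rw [← EReal.coe_sub] at h
    have : a - r ≤ c := by exact_mod_cast h
    have : a - c ≤ r := by linarith
    exact_mod_cast this
  | top => exact le_top


lemma aux_cd_right {g : ℝ → ℝ → ℝ} (hg : ContDiff ℝ 2 (Function.uncurry g)) (x : ℝ) :
    ContDiff ℝ 2 (fun t => g x t) :=
  hg.comp (contDiff_const.prodMk contDiff_id)

lemma aux_cd_left {g : ℝ → ℝ → ℝ} (hg : ContDiff ℝ 2 (Function.uncurry g)) (θ : ℝ) :
    ContDiff ℝ 2 (fun x => g x θ) :=
  hg.comp (contDiff_id.prodMk contDiff_const)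

lemma aux_cross {Θ : Set ℝ} (hΘI : Θ.OrdConnected) {g : ℝ → ℝ → ℝ}
    (hg : ContDiff ℝ 2 (Function.uncurry g))
    (hsm : ∀ θ ∈ Θ, StrictMonoOn (fun x => deriv (fun θ' => g x θ') θ) (Ici 0))
    {θ1 θ2 : ℝ} (h1 : θ1 ∈ Θ) (h2 : θ2 ∈ Θ) (hlt : θ1 < θ2) :
    StrictMonoOn (fun x => g x θ2 - g x θ1) (Ici 0) := by
  intro x1 hx1 x2 hx2 hx
  have hIcc : Icc θ1 θ2 ⊆ Θ := hΘI.out h1 h2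
  have hd1 : Differentiable ℝ (fun t => g x1 t) := (aux_cd_right hg x1).differentiable two_ne_zero
  have hd2 : Differentiable ℝ (fun t => g x2 t) := (aux_cd_right hg x2).differentiable two_ne_zero
  have hF : StrictMonoOn (fun t => g x2 t - g x1 t) (Icc θ1 θ2) := by
    apply strictMonoOn_of_deriv_pos (convex_Icc θ1 θ2)
    · exact ((hd2.continuous.sub hd1.continuous)).continuousOn
    · intro t ht
      rw [interior_Icc] at ht
      rw [deriv_fun_sub (hd2 t) (hd1 t)]
      have := hsm t (hIcc (Ioo_subset_Icc_self ht)) hx1 hx2 hx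
      linarith [this]
  have := hF (left_mem_Icc.2 hlt.le) (right_mem_Icc.2 hlt.le) hlt
  simp only at this ⊢
  linarith

lemma aux_mono {Θ : Set ℝ} (hΘI : Θ.OrdConnected) {g : ℝ → ℝ → ℝ}
    (hg : ContDiff ℝ 2 (Function.uncurry g))
    (hsm : ∀ θ ∈ Θ, StrictMonoOn (fun x => deriv (fun θ' => g x θ') θ) (Ici 0))
    {v : ℝ → ℝ} {θ1 θ2 x1 x2 : ℝ} (h1 : θ1 ∈ Θ) (h2 : θ2 ∈ Θ) (hlt : θ1 < θ2)
    (hx1 : x1 ∈ gSubdiff Θ g v θ1) (hx2 : x2 ∈ gSubdiff Θ g v θ2) : x1 ≤ x2 := by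
  by_contra hcon
  push_neg at hcon
  have e1 := aux_gSubdiff_eval hx1
  have e2 := aux_gSubdiff_eval hx2
  have l1 : (((g x1 θ2 - v θ2 : ℝ)) : EReal) ≤ (((g x1 θ1 - v θ1 : ℝ)) : EReal) :=
    e1 ▸ aux_le_gDualV g v h2 x1
  have l2 : (((g x2 θ1 - v θ1 : ℝ)) : EReal) ≤ (((g x2 θ2 - v θ2 : ℝ)) : EReal) :=
    e2 ▸ aux_le_gDualV g v h1 x2
  have r1 : g x1 θ2 - v θ2 ≤ g x1 θ1 - v θ1 := by exact_mod_cast l1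
  have r2 : g x2 θ1 - v θ1 ≤ g x2 θ2 - v θ2 := by exact_mod_cast l2
  have hstrict := aux_cross hΘI hg hsm h1 h2 hlt hx2.1 hx1.1 hcon
  simp only at hstrict
  linarith

lemma aux_uniq {Θ : Set ℝ} {g : ℝ → ℝ → ℝ}
    (hg : ContDiff ℝ 2 (Function.uncurry g))
    (hsm : ∀ θ ∈ Θ, StrictMonoOn (fun x => deriv (fun θ' => g x θ') θ) (Ici 0))
    {v : ℝ → ℝ} {θh : ℝ} (hθh : θh ∈ Θ) (hnb : ∀ᶠ t in nhds θh, t ∈ Θ)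
    (hdv : DifferentiableAt ℝ v θh)
    {x1 x2 : ℝ} (hx1 : x1 ∈ gSubdiff Θ g v θh) (hx2 : x2 ∈ gSubdiff Θ g v θh) : x1 = x2 := by
  have key : ∀ x : ℝ, x ∈ gSubdiff Θ g v θh → deriv (fun t => g x t) θh = deriv v θh := by
    intro x hx
    have e := aux_gSubdiff_eval hx
    have hmax : IsLocalMax (fun t => g x t - v t) θh := by
      filter_upwards [hnb] with t ht
      have := aux_le_gDualV g v (θ := t) ht x
      rw [e] at this
      have : g x t - v t ≤ g x θh - v θh := by exact_mod_cast this
      simpa using this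
    have hdg : DifferentiableAt ℝ (fun t => g x t) θh :=
      ((aux_cd_right hg x).differentiable two_ne_zero).differentiableAt
    have hz := hmax.deriv_eq_zero
    rw [deriv_fun_sub hdg hdv] at hz
    linarith
  have h1 := key x1 hx1
  have h2 := key x2 hx2
  exact (hsm θh hθh).injOn hx1.1 hx2.1 (by rw [h1, h2])


lemma aux_closed {Θ : Set ℝ} {g : ℝ → ℝ → ℝ} (hg : Continuous (Function.uncurry g)) {v : ℝ → ℝ}
    {θh : ℝ} (hθh : θh ∈ Θ) (hvc : ContinuousAt v θh)
    {θs : ℕ → ℝ} (hθs : ∀ n, θs n ∈ Θ) (hθlim : Tendsto θs atTop (𝓝 θh))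
    {xs : ℕ → ℝ} (hxs : ∀ n, xs n ∈ gSubdiff Θ g v (θs n)) {xh : ℝ}
    (hxlim : Tendsto xs atTop (𝓝 xh)) : xh ∈ gSubdiff Θ g v θh := by
  have hxh0 : 0 ≤ xh := ge_of_tendsto hxlim (Eventually.of_forall fun n => (hxs n).1)
  set c : ℝ := g xh θh - v θh with hc
  have hclim : Tendsto (fun n => g (xs n) (θs n) - v (θs n)) atTop (𝓝 c) := by
    have h1 : Tendsto (fun n => (xs n, θs n)) atTop (𝓝 (xh, θh)) := hxlim.prodMk_nhds hθlim
    exact ((hg.tendsto _).comp h1).sub (hvc.tendsto.comp hθlim)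
  have hle : gDualV Θ g v xh ≤ (c : EReal) := by
    by_contra hcon
    push_neg at hcon
    obtain ⟨y', hy1, hy2⟩ := EReal.exists_between_coe_real hcon
    have := (aux_gDualV_lsc Θ hg v xh) _ hy2
    have hev : ∀ᶠ n in atTop, (y' : EReal) < gDualV Θ g v (xs n) := hxlim.eventually this
    have hev2 : ∀ᶠ n in atTop, g (xs n) (θs n) - v (θs n) < y' :=
      hclim.eventually (Filter.Tendsto.eventually_lt_const (by exact_mod_cast hy1) tendsto_id)
    obtain ⟨n, h1, h2⟩ := (hev.and hev2).exists
    rw [aux_gSubdiff_eval (hxs n)] at h1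
    exact absurd (EReal.coe_lt_coe_iff.mp h1) (not_lt.2 h2.le)
  have hge : (c : EReal) ≤ gDualV Θ g v xh := aux_le_gDualV g v hθh xh
  have heq : gDualV Θ g v xh = (c : EReal) := le_antisymm hle hge
  refine ⟨hxh0, ?_⟩
  rw [heq, hc, ← EReal.coe_add]
  norm_num

lemma aux_tail {Θ : Set ℝ} (hΘI : Θ.OrdConnected) {g : ℝ → ℝ → ℝ}
    (hg : ContDiff ℝ 2 (Function.uncurry g))
    (hsm : ∀ θ ∈ Θ, StrictMonoOn (fun x => deriv (fun θ' => g x θ') θ) (Ici 0))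
    {v : ℝ → ℝ} {θh θ' x' : ℝ} (hθh : θh ∈ Θ) (hθ' : θ' ∈ Θ) (hlt : θh < θ')
    (hx' : x' ∈ gSubdiff Θ g v θ') :
    ∃ M : ℝ, 0 ≤ M ∧ x' < M ∧ ∃ η : ℝ, 0 < η ∧
      ∀ x, M ≤ x → (g x θh : EReal) - gDualV Θ g v x ≤ ((v θh - η : ℝ) : EReal) := by
  have hx'0 : 0 ≤ x' := hx'.1
  set M := x' + 1 with hM
  have hM0 : 0 ≤ M := by linarith
  have hcross := aux_cross hΘI hg hsm hθh hθ' hlt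
  have hub : g x' θ' - g x' θh ≥ v θ' - v θh := by
    have h1 := aux_le_gDualV g v hθh x'
    rw [aux_gSubdiff_eval hx'] at h1
    have : g x' θh - v θh ≤ g x' θ' - v θ' := by exact_mod_cast h1
    linarith
  have hMgt : g x' θ' - g x' θh < g M θ' - g M θh :=
    hcross hx'0 (by simp only [mem_Ici]; linarith) (by linarith)
  set η := (g M θ' - g M θh) - (v θ' - v θh) with hη
  have hη0 : 0 < η := by simp only [hη]; linarith
  refine ⟨M, hM0, by linarith, η, hη0, fun x hx => ?_⟩
  have hx0 : 0 ≤ x := le_trans hM0 hx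
  have hw : (((g x θ' - v θ' : ℝ)) : EReal) ≤ gDualV Θ g v x := aux_le_gDualV g v hθ' x
  have hmono : g M θ' - g M θh ≤ g x θ' - g x θh := by
    rcases eq_or_lt_of_le hx with h | h
    · rw [h]
    · exact (hcross (by exact hM0) (by exact le_trans hM0 hx) h).le
  calc (g x θh : EReal) - gDualV Θ g v x
      ≤ (g x θh : EReal) - (((g x θ' - v θ' : ℝ)) : EReal) := by
        exact EReal.sub_le_sub (le_refl _) hw
    _ = (((g x θh - (g x θ' - v θ') : ℝ)) : EReal) := by rw [← EReal.coe_sub]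
    _ ≤ ((v θh - η : ℝ) : EReal) := by
        apply EReal.coe_le_coe_iff.mpr
        simp only [hη]
        linarith


lemma aux_sub_lt {a b : ℝ} {p : EReal} (h : (b:EReal) < p) : (a:EReal) - p < ((a - b:ℝ):EReal) := by
  induction p with
  | bot => exact absurd h (by simp)
  | coe r =>
    rw [← EReal.coe_sub]
    have hbr : b < r := by exact_mod_cast h
    exact_mod_cast (by linarith : a - r < a - b)
  | top =>
    rw [EReal.sub_top]
    exact EReal.bot_lt_coe _

lemma aux_main {Θ : Set ℝ} (hΘI : Θ.OrdConnected) {g : ℝ → ℝ → ℝ}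
    (hg : ContDiff ℝ 2 (Function.uncurry g))
    (hsm : ∀ θ ∈ Θ, StrictMonoOn (fun x => deriv (fun θ' => g x θ') θ) (Ici 0))
    {v : ℝ → ℝ}
    {θh : ℝ} (hθh : θh ∈ Θ) (hnb : ∀ᶠ t in nhds θh, t ∈ Θ)
    (hdv : DifferentiableAt ℝ v θh)
    {θ' x' : ℝ} (hθ' : θ' ∈ Θ) (hlt : θh < θ') (hx' : x' ∈ gSubdiff Θ g v θ')
    {ψ : ℝ → EReal}
    (husc : UpperSemicontinuousOn (fun x => (g x θh : EReal) - ψ x) (Ici 0))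
    (hdual : (⨆ x ∈ Ici (0:ℝ), ((g x θh : EReal) - ψ x)) = (v θh : EReal))
    (hwψ : ∀ x, 0 ≤ x → gDualV Θ g v x ≤ ψ x)
    {x₀ : ℝ} (hx₀ : x₀ ∈ gSubdiff Θ g v θh) :
    ψ x₀ ≤ gDualV Θ g v x₀ := by
  by_contra hcon
  push_neg at hcon
  have hwx₀ : gDualV Θ g v x₀ = (((g x₀ θh - v θh : ℝ)) : EReal) := aux_gSubdiff_eval hx₀
  -- tail bound
  obtain ⟨M, hM0, hx'M, η, hη0, htail⟩ := aux_tail hΘI hg hsm hθh hθ' hlt hx'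
  -- the function g - ψ is bounded above by v θh on Ici 0
  have hfle : ∀ x, 0 ≤ x → (g x θh : EReal) - ψ x ≤ (v θh : EReal) := by
    intro x hx
    rw [← hdual]
    exact le_iSup₂ (f := fun x (_ : x ∈ Ici (0:ℝ)) => (g x θh : EReal) - ψ x) x hx
  have hgw : ∀ x, 0 ≤ x → (g x θh : EReal) - ψ x ≤ (g x θh : EReal) - gDualV Θ g v x :=
    fun x hx => EReal.sub_le_sub (le_refl _) (hwψ x hx)
  -- approximate maximizers
  set ε : ℕ → ℝ := fun n => min η (1/(n+1)) with hε
  have hε0 : ∀ n, 0 < ε n := fun n => lt_min hη0 (by positivity)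
  have hεη : ∀ n, ε n ≤ η := fun n => min_le_left _ _
  have hεlim : Tendsto ε atTop (𝓝 0) := by
    have h1 : Tendsto (fun n : ℕ => 1/((n:ℝ)+1)) atTop (𝓝 0) := tendsto_one_div_add_atTop_nhds_zero_nat
    have := (tendsto_const_nhds (x := η) (f := atTop (α := ℕ))).min h1
    rwa [min_eq_right hη0.le] at this
  have hsel : ∀ n : ℕ, ∃ x, 0 ≤ x ∧ (((v θh - ε n : ℝ)) : EReal) < (g x θh : EReal) - ψ x := by
    intro n
    have hlt' : (((v θh - ε n : ℝ)) : EReal) < ⨆ x ∈ Ici (0:ℝ), ((g x θh : EReal) - ψ x) := by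
      rw [hdual]
      exact_mod_cast (by linarith [hε0 n] : v θh - ε n < v θh)
    obtain ⟨x, hx⟩ := lt_iSup_iff.mp hlt'
    obtain ⟨hx0, hxlt⟩ := lt_iSup_iff.mp hx
    exact ⟨x, hx0, hxlt⟩
  choose xs hxs0 hxslt using hsel
  -- xs n ≤ M
  have hxsM : ∀ n, xs n ≤ M := by
    intro n
    by_contra hM
    push_neg at hM
    have h1 := (hxslt n).trans_le ((hgw (xs n) (hxs0 n)).trans (htail (xs n) hM.le))
    have : v θh - ε n < v θh - η := by exact_mod_cast h1
    linarith [hεη n]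
  -- convergent subsequence
  obtain ⟨xh, hxhmem, φ, hφ, hxlim⟩ := tendsto_subseq_of_bounded (Metric.isBounded_Icc 0 M)
    (x := xs) (fun n => ⟨hxs0 n, hxsM n⟩)
  rw [closure_Icc] at hxhmem
  have hεφlim : Tendsto (fun k => ε (φ k)) atTop (𝓝 0) := hεlim.comp hφ.tendsto_atTop
  -- xh in subdifferential at θh
  have hgcont : Continuous (Function.uncurry g) := hg.continuous
  have hgxcont : Tendsto (fun k => g (xs (φ k)) θh) atTop (𝓝 (g xh θh)) := by
    have h1 : Tendsto (fun k => (xs (φ k), θh)) atTop (𝓝 (xh, θh)) :=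
      hxlim.prodMk_nhds tendsto_const_nhds
    exact (hgcont.tendsto _).comp h1
  have hxhsub : xh ∈ gSubdiff Θ g v θh := by
    have hle : gDualV Θ g v xh ≤ (((g xh θh - v θh : ℝ)) : EReal) := by
      by_contra hc
      push_neg at hc
      obtain ⟨y', hy1, hy2⟩ := EReal.exists_between_coe_real hc
      have hy1' : g xh θh - v θh < y' := by exact_mod_cast hy1
      have hev := hxlim.eventually ((aux_gDualV_lsc Θ hgcont v xh) _ hy2)
      -- from hev : eventually y' < w (xs (φ k)); combine with approx maximizer
      have hkey : ∀ᶠ k in atTop, v θh - ε (φ k) < g (xs (φ k)) θh - y' := by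
        filter_upwards [hev] with k hk
        have h1 : (((v θh - ε (φ k) : ℝ)) : EReal) < (g (xs (φ k)) θh : EReal) - ψ (xs (φ k)) :=
          hxslt (φ k)
        have h2 := (hgw _ (hxs0 (φ k))).trans (EReal.sub_le_sub (le_refl ((g (xs (φ k)) θh : EReal))) hk.le)
        have h3 := h1.trans_le h2
        rw [← EReal.coe_sub] at h3
        exact_mod_cast h3
      have hlim2 : Tendsto (fun k => g (xs (φ k)) θh - y') atTop (𝓝 (g xh θh - y')) :=
        hgxcont.sub tendsto_const_nhds
      have hlim1 : Tendsto (fun k => v θh - ε (φ k)) atTop (𝓝 (v θh)) := by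
        have := (tendsto_const_nhds (x := v θh) (f := atTop (α := ℕ))).sub hεφlim
        simpa using this
      have hfin := le_of_tendsto_of_tendsto hlim1 hlim2 (hkey.mono fun k h => h.le)
      linarith
    have hge := aux_le_gDualV g v hθh xh
    have heq := le_antisymm hle hge
    refine ⟨hxhmem.1, ?_⟩
    rw [heq, ← EReal.coe_add]
    norm_num
  -- xh = x₀ and the USC contradiction
  have hxheq : xh = x₀ := aux_uniq hg hsm hθh hnb hdv hxhsub hx₀
  have hψlt : (g x₀ θh : EReal) - ψ x₀ < ((v θh : ℝ) : EReal) := by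
    have h1 : (((g x₀ θh - v θh : ℝ)) : EReal) < ψ x₀ := hwx₀ ▸ hcon
    have h2 := aux_sub_lt (a := g x₀ θh) h1
    have h3 : g x₀ θh - (g x₀ θh - v θh) = v θh := by ring
    rwa [h3] at h2
  obtain ⟨y, hyl, hyr⟩ := exists_between hψlt
  have hev2 := husc x₀ (mem_Ici.2 hx₀.1) y hyl
  have htend : Tendsto (fun k => xs (φ k)) atTop (nhdsWithin x₀ (Ici 0)) := by
    rw [hxheq] at hxlim
    exact tendsto_nhdsWithin_iff.mpr ⟨hxlim, Eventually.of_forall fun k => hxs0 (φ k)⟩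
  have hev3 : ∀ᶠ k in atTop, (g (xs (φ k)) θh : EReal) - ψ (xs (φ k)) < y :=
    htend.eventually hev2
  have hclim : Tendsto (fun k => (((v θh - ε (φ k) : ℝ)) : EReal)) atTop (𝓝 ((v θh : ℝ) : EReal)) := by
    have hlim1 : Tendsto (fun k => v θh - ε (φ k)) atTop (𝓝 (v θh)) := by
      have := (tendsto_const_nhds (x := v θh) (f := atTop (α := ℕ))).sub hεφlim
      simpa using this
    exact (continuous_coe_real_ereal.tendsto _).comp hlim1
  have hev4 : ∀ᶠ k in atTop, y < (((v θh - ε (φ k) : ℝ)) : EReal) :=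
    hclim.eventually_const_lt hyr
  obtain ⟨k, h3, h4⟩ := (hev3.and hev4).exists
  exact absurd ((h4.trans (hxslt (φ k))).trans h3) (lt_irrefl y)


lemma aux_stepA {Θ : Set ℝ} (hΘ : Θ.Nonempty) (g : ℝ → ℝ → ℝ) (v : ℝ → ℝ) (ψ : ℝ → EReal)
    (hdual : ∀ θ ∈ Θ, gDualW g ψ θ = (v θ : EReal)) :
    ∀ x, 0 ≤ x → gDualV Θ g v x ≤ ψ x := by
  intro x hx
  have hle : ∀ θ ∈ Θ, (g x θ : EReal) - ψ x ≤ (v θ : EReal) := by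
    intro θ hθ
    rw [← hdual θ hθ]
    exact le_iSup₂ (f := fun x (_ : x ∈ Ici (0:ℝ)) => (g x θ : EReal) - ψ x) x hx
  obtain ⟨θ0, hθ0⟩ := hΘ
  have hbot : ψ x ≠ ⊥ := by
    intro hb
    have := hle θ0 hθ0
    rw [hb, EReal.sub_bot (EReal.coe_ne_bot _)] at this
    exact absurd this (by simp)
  rw [aux_gDualV_eq]
  exact iSup₂_le fun θ hθ => aux_ereal_sub_le hbot (hle θ hθ)

/-- Uniqueness for the inverse problem.  Let `θm` be the left endpoint of `Θ` and
`θR = sup {θ ∈ Θ : ∂^g v(θ) ≠ ∅}` (both in `EReal`).  Suppose `v` is `g`-convex and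
C¹ on `(θm, θR)`, `∂^g v(θ) ≠ ∅` for every `θ ∈ (θm, θR)`, and every selection
`x*(θ) ∈ ∂^g v(θ)` on `(θm, θR)` has infimum `0` (i.e. `lim_{θ↓θm} x* = 0`, `x*` being
nondecreasing) and is unbounded above (i.e. `lim_{θ↑θR} x* = ∞`).  Then any
`ψ : [0,∞) → ℝ∪{+∞}` with `ψ(0) = 0`, with `x ↦ g(x,θ) - ψ(x)` upper semicontinuous
for each `θ ∈ Θ`, and with `ψ^g = v` on `Θ`, equals `v^g`; in particular there is at
most one such `ψ`. -/
theorem at_most_one_consistent_dual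
    (Θ : Set ℝ) (hΘ : Θ.Nonempty) (hΘI : Θ.OrdConnected)
    (g : ℝ → ℝ → ℝ) (hSM : SpenceMirrlees (Ici 0) Θ g)
    (v : ℝ → ℝ) (hvconv : GConvex Θ g v)
    (θm θR : EReal)
    (hθm : θm = sInf {t : EReal | ∃ θ ∈ Θ, t = (θ : EReal)})
    (hθR : θR = sSup {t : EReal | ∃ θ ∈ Θ, (gSubdiff Θ g v θ).Nonempty ∧ t = (θ : EReal)})
    (hCD : ContDiffOn ℝ 1 v {θ : ℝ | θm < (θ : EReal) ∧ (θ : EReal) < θR})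
    (hne : ∀ θ : ℝ, θm < (θ : EReal) → (θ : EReal) < θR → (gSubdiff Θ g v θ).Nonempty)
    (hlim : ∀ xsel : ℝ → ℝ,
      (∀ θ : ℝ, θm < (θ : EReal) → (θ : EReal) < θR → xsel θ ∈ gSubdiff Θ g v θ) →
      sInf (xsel '' {θ : ℝ | θm < (θ : EReal) ∧ (θ : EReal) < θR}) = 0 ∧
      ¬ BddAbove (xsel '' {θ : ℝ | θm < (θ : EReal) ∧ (θ : EReal) < θR})) :
    ∀ ψ : ℝ → EReal, ψ 0 = 0 →
      (∀ θ ∈ Θ, UpperSemicontinuousOn (fun x => (g x θ : EReal) - ψ x) (Ici 0)) →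
      (∀ θ ∈ Θ, gDualW g ψ θ = (v θ : EReal)) →
      ∀ x : ℝ, 0 ≤ x → ψ x = gDualV Θ g v x := by
  intro ψ hψ0 husc hdual x₀ hx₀0
  obtain ⟨hg2, hsmx, hsmθ⟩ := hSM
  have hgc : Continuous (Function.uncurry g) := hg2.continuous
  set S : Set ℝ := {θ : ℝ | θm < (θ:EReal) ∧ (θ:EReal) < θR} with hSdef
  have hSopen : IsOpen S := by
    have he : S = (fun θ : ℝ => (θ : EReal)) ⁻¹' (Ioo θm θR) := rfl
    rw [he]
    exact isOpen_Ioo.preimage continuous_coe_real_ereal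
  have hSsub : S ⊆ Θ := by
    intro θ hθ
    obtain ⟨h1, h2⟩ := hθ
    rw [hθm] at h1
    obtain ⟨t, ⟨a, ha, rfl⟩, hat⟩ := sInf_lt_iff.mp h1
    rw [hθR] at h2
    obtain ⟨t, ⟨b, hb, _, rfl⟩, hbt⟩ := lt_sSup_iff.mp h2
    exact hΘI.out ha hb ⟨(EReal.coe_lt_coe_iff.mp hat).le, (EReal.coe_lt_coe_iff.mp hbt).le⟩
  have hIccS : ∀ {a b : ℝ}, a ∈ S → b ∈ S → Icc a b ⊆ S := by
    intro a b ha hb t ht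
    exact ⟨lt_of_lt_of_le ha.1 (EReal.coe_le_coe_iff.mpr ht.1),
      lt_of_le_of_lt (EReal.coe_le_coe_iff.mpr ht.2) hb.2⟩
  have hnb : ∀ θ ∈ S, ∀ᶠ t in nhds θ, t ∈ Θ := fun θ hθ => by
    filter_upwards [hSopen.mem_nhds hθ] with t ht using hSsub ht
  have hdv : ∀ θ ∈ S, DifferentiableAt ℝ v θ := fun θ hθ =>
    (hCD.contDiffAt (hSopen.mem_nhds hθ)).differentiableAt one_ne_zero
  have hvc : ∀ θ ∈ S, ContinuousAt v θ := fun θ hθ => (hdv θ hθ).continuousAt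
  have hwψ : ∀ x, 0 ≤ x → gDualV Θ g v x ≤ ψ x := aux_stepA hΘ g v ψ hdual
  have htp : ∀ θ ∈ S, ∃ θ', θ' ∈ Θ ∧ θ < θ' ∧ (gSubdiff Θ g v θ').Nonempty := by
    intro θ hθ
    have h2 := hθ.2
    rw [hθR] at h2
    obtain ⟨t, ⟨b, hb, hbne, rfl⟩, hbt⟩ := lt_sSup_iff.mp h2
    exact ⟨b, hb, EReal.coe_lt_coe_iff.mp hbt, hbne⟩
  have hmain : ∀ θ ∈ S, ∀ x₁ ∈ gSubdiff Θ g v θ, ψ x₁ = gDualV Θ g v x₁ := by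
    intro θ hθ x₁ hx₁
    obtain ⟨θ', hθ'Θ, hθθ', x', hx'⟩ := htp θ hθ
    refine le_antisymm ?_ (hwψ x₁ hx₁.1)
    exact aux_main hΘI hg2 hsmθ (hSsub hθ) (hnb θ hθ) (hdv θ hθ) hθ'Θ hθθ' hx'
      (husc θ (hSsub hθ)) (hdual θ (hSsub hθ)) hwψ hx₁
  -- the canonical selection
  have hXsel : ∀ θ : ℝ, ∃ x : ℝ, θ ∈ S → x ∈ gSubdiff Θ g v θ := by
    intro θ
    by_cases h : θ ∈ S
    · obtain ⟨x, hx⟩ := hne θ h.1 h.2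
      exact ⟨x, fun _ => hx⟩
    · exact ⟨0, fun hc => absurd hc h⟩
  choose X hX using hXsel
  obtain ⟨hXinf, hXunb⟩ := hlim X (fun θ h1 h2 => hX θ ⟨h1, h2⟩)
  have hSne : S.Nonempty := by
    rcases S.eq_empty_or_nonempty with h | h
    · exfalso
      apply hXunb
      rw [h, image_empty]
      exact bddAbove_empty
    · exact h
  have hX0 : ∀ θ ∈ S, 0 ≤ X θ := fun θ hθ => (hX θ hθ).1
  have hXmono : ∀ {θ1 θ2 : ℝ}, θ1 ∈ S → θ2 ∈ S → θ1 ≤ θ2 → X θ1 ≤ X θ2 := by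
    intro θ1 θ2 h1 h2 hle
    rcases eq_or_lt_of_le hle with rfl | hlt
    · exact le_refl _
    · exact aux_mono hΘI hg2 hsmθ (hSsub h1) (hSsub h2) hlt (hX θ1 h1) (hX θ2 h2)
  -- surjectivity of the selection onto (0, ∞)
  have hsurj : ∀ x₁ : ℝ, 0 < x₁ → ∃ θ ∈ S, x₁ ∈ gSubdiff Θ g v θ := by
    intro x₁ hx₁
    obtain ⟨y, ⟨θb, hθbS, rfl⟩, hyb⟩ := not_bddAbove_iff.mp hXunb x₁
    have himne : (X '' S).Nonempty := ⟨X θb, mem_image_of_mem _ hθbS⟩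
    have hlt1 : ∃ y ∈ X '' S, y < x₁ := by
      by_contra hc
      push_neg at hc
      have := le_csInf himne hc
      rw [hXinf] at this
      linarith
    obtain ⟨y, ⟨θa, hθaS, rfl⟩, hya⟩ := hlt1
    have hab : θa < θb := by
      by_contra hc
      push_neg at hc
      have := hXmono hθbS hθaS hc
      linarith
    set A : Set ℝ := {θ | θ ∈ Icc θa θb ∧ X θ ≤ x₁} with hA
    have hAmem : θa ∈ A := ⟨left_mem_Icc.2 hab.le, hya.le⟩
    have hAne : A.Nonempty := ⟨θa, hAmem⟩
    have hAbdd : BddAbove A := ⟨θb, fun θ hθ => hθ.1.2⟩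
    set θc := sSup A with hθc
    have hθcI : θc ∈ Icc θa θb :=
      ⟨le_csSup hAbdd hAmem, csSup_le hAne fun θ hθ => hθ.1.2⟩
    have hθcS : θc ∈ S := hIccS hθaS hθbS hθcI
    have hXc := hX θc hθcS
    rcases lt_trichotomy (X θc) x₁ with hlt | heq | hgt
    · -- approach from the right
      exfalso
      have hcb : θc < θb := by
        rcases eq_or_lt_of_le hθcI.2 with h | h
        · rw [h] at hlt; linarith
        · exact h
      set θs : ℕ → ℝ := fun n => θc + (θb - θc)/(n+2) with hθs
      have hpos : ∀ n : ℕ, 0 < (θb - θc)/((n:ℝ)+2) := fun n =>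
        div_pos (sub_pos.mpr hcb) (by positivity)
      have hle1 : ∀ n : ℕ, (θb - θc)/((n:ℝ)+2) ≤ θb - θc := fun n => by
        rw [div_le_iff₀ (by positivity)]
        nlinarith [sub_pos.mpr hcb]
      have hθsI : ∀ n, θs n ∈ Icc θa θb := fun n =>
        ⟨le_trans hθcI.1 (by simp only [hθs]; nlinarith [hpos n]),
         by simp only [hθs]; nlinarith [hle1 n]⟩
      have hθsS : ∀ n, θs n ∈ S := fun n => hIccS hθaS hθbS (hθsI n)
      have hθsgt : ∀ n, θc < θs n := fun n => by simp only [hθs]; nlinarith [hpos n]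
      have hXgt : ∀ n, x₁ < X (θs n) := by
        intro n
        by_contra hc
        push_neg at hc
        have : θs n ∈ A := ⟨hθsI n, hc⟩
        exact absurd (le_csSup hAbdd this) (not_le.2 (hθsgt n))
      have hanti : Antitone (fun n => X (θs n)) := by
        intro n m hnm
        apply hXmono (hθsS m) (hθsS n)
        simp only [hθs]
        have h2 : ((n:ℝ)+2) ≤ ((m:ℝ)+2) := by
          have := (Nat.cast_le (α := ℝ)).mpr hnm
          linarith
        have := div_le_div_of_nonneg_left (sub_pos.mpr hcb).le (by positivity : (0:ℝ) < (n:ℝ)+2) h2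
        linarith
      have hRbdd : BddBelow (range fun n => X (θs n)) :=
        ⟨x₁, fun y ⟨n, hn⟩ => hn ▸ (hXgt n).le⟩
      set R := ⨅ n, X (θs n) with hR
      have hXlim : Tendsto (fun n => X (θs n)) atTop (nhds R) :=
        tendsto_atTop_ciInf hanti hRbdd
      have hθslim : Tendsto θs atTop (nhds θc) := by
        have h1 : Tendsto (fun n : ℕ => ((n:ℝ)+2)) atTop atTop :=
          tendsto_atTop_add_const_right _ 2 tendsto_natCast_atTop_atTop
        have h2 : Tendsto (fun n : ℕ => (θb - θc)/((n:ℝ)+2)) atTop (nhds 0) :=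
          tendsto_const_nhds.div_atTop h1
        have h3 : Tendsto (fun n : ℕ => θc + (θb - θc)/((n:ℝ)+2)) atTop (nhds (θc + 0)) :=
          tendsto_const_nhds.add h2
        simpa using h3
      have hRsub : R ∈ gSubdiff Θ g v θc :=
        aux_closed hgc (hSsub hθcS) (hvc θc hθcS) (fun n => hSsub (hθsS n)) hθslim
          (fun n => hX (θs n) (hθsS n)) hXlim
      have hReq : R = X θc :=
        aux_uniq hg2 hsmθ (hSsub hθcS) (hnb θc hθcS) (hdv θc hθcS) hRsub hXc
      have hRge : x₁ ≤ R := le_ciInf fun n => (hXgt n).le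
      rw [hReq] at hRge
      linarith
    · exact ⟨θc, hθcS, heq ▸ hXc⟩
    · -- approach from the left
      exfalso
      have hsel2 : ∀ n : ℕ, ∃ θ, θ ∈ A ∧ θc - 1/((n:ℝ)+1) < θ := by
        intro n
        have : θc - 1/((n:ℝ)+1) < sSup A := by
          rw [← hθc]; nlinarith [one_div_pos.mpr (by positivity : (0:ℝ) < (n:ℝ)+1)]
        obtain ⟨θ, hθ, hθgt⟩ := exists_lt_of_lt_csSup hAne this
        exact ⟨θ, hθ, hθgt⟩
      choose θs hθsA hθsgt using hsel2
      have hθsS : ∀ n, θs n ∈ S := fun n => hIccS hθaS hθbS (hθsA n).1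
      have hθslim : Tendsto θs atTop (nhds θc) := by
        have hlow : Tendsto (fun n : ℕ => θc - 1/((n:ℝ)+1)) atTop (nhds θc) := by
          have h2 : Tendsto (fun n : ℕ => 1/((n:ℝ)+1)) atTop (nhds 0) :=
            tendsto_one_div_add_atTop_nhds_zero_nat
          have h3 : Tendsto (fun n : ℕ => θc - 1/((n:ℝ)+1)) atTop (nhds (θc - 0)) :=
            tendsto_const_nhds.sub h2
          simpa using h3
        exact tendsto_of_tendsto_of_tendsto_of_le_of_le hlow tendsto_const_nhds
          (fun n => (hθsgt n).le) (fun n => le_csSup hAbdd (hθsA n))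
      have hXmem2 : ∀ n, X (θs n) ∈ Icc 0 x₁ := fun n => ⟨hX0 _ (hθsS n), (hθsA n).2⟩
      obtain ⟨L, hLmem, φ, hφ, hXlim⟩ :=
        tendsto_subseq_of_bounded (Metric.isBounded_Icc 0 x₁) hXmem2
      rw [closure_Icc] at hLmem
      have hLsub : L ∈ gSubdiff Θ g v θc :=
        aux_closed hgc (hSsub hθcS) (hvc θc hθcS) (fun k => hSsub (hθsS (φ k)))
          (hθslim.comp hφ.tendsto_atTop) (fun k => hX _ (hθsS (φ k))) hXlim
      have hLeq : L = X θc :=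
        aux_uniq hg2 hsmθ (hSsub hθcS) (hnb θc hθcS) (hdv θc hθcS) hLsub hXc
      have := hLmem.2
      rw [hLeq] at this
      linarith
  rcases eq_or_lt_of_le hx₀0 with heq | hpos
  swap
  · obtain ⟨θ, hθ, hmem⟩ := hsurj x₀ hpos
    exact hmain θ hθ x₀ hmem
  -- now x₀ = 0
  subst heq
  by_cases hex : ∃ θ ∈ S, (0:ℝ) ∈ gSubdiff Θ g v θ
  · obtain ⟨θ, hθ, h0⟩ := hex
    exact hmain θ hθ 0 h0
  -- hard case: the selection is strictly positive
  have hXpos : ∀ θ ∈ S, 0 < X θ := by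
    intro θ hθ
    rcases eq_or_lt_of_le (hX0 θ hθ) with h | h
    · exact absurd ⟨θ, hθ, h ▸ hX θ hθ⟩ hex
    · exact h
  obtain ⟨θ1, hθ1S⟩ := hSne
  set D : ℝ → ℝ := fun x => deriv (fun x' => g x' θ1) x with hD
  have hDcont : Continuous D := (aux_cd_left hg2 θ1).continuous_deriv one_le_two
  obtain ⟨C, hC⟩ := (isCompact_Icc (a := (0:ℝ)) (b := 1)).exists_bound_of_continuousOn
    hDcont.continuousOn
  have hC0 : 0 ≤ C := le_trans (norm_nonneg _) (hC 0 ⟨le_refl 0, zero_le_one⟩)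
  have hDbound : ∀ θ ∈ Θ, θ ≤ θ1 → ∀ t ∈ Icc (0:ℝ) 1, deriv (fun x' => g x' θ) t ≤ C := by
    intro θ hθ hle t ht
    have h1 : deriv (fun x' => g x' θ) t ≤ D t := by
      rcases eq_or_lt_of_le hle with rfl | hlt
      · exact le_refl _
      · exact (hsmx t ht.1 hθ (hSsub hθ1S) hlt).le
    have h2 : D t ≤ C := le_trans (le_abs_self _) (by simpa [Real.norm_eq_abs] using hC t ht)
    linarith
  have hDlow : ∀ t ∈ Icc (0:ℝ) 1, -C ≤ D t := by
    intro t ht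
    have := hC t ht
    rw [Real.norm_eq_abs, abs_le] at this
    exact this.1
  have hdiffub : ∀ θ ∈ Θ, θ ≤ θ1 → ∀ z ∈ Icc (0:ℝ) 1, g z θ - g 0 θ ≤ C * z := by
    intro θ hθ hle z hz
    have hgd : Differentiable ℝ (fun x' => g x' θ) := (aux_cd_left hg2 θ).differentiable two_ne_zero
    have hmono2 : MonotoneOn (fun x => C*x - g x θ) (Icc 0 z) := by
      apply monotoneOn_of_deriv_nonneg (convex_Icc _ _)
      · exact ((continuous_const.mul continuous_id).sub hgd.continuous).continuousOn
      · exact (((differentiable_id.const_mul C).sub hgd).differentiableOn)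
      · intro t ht
        rw [interior_Icc] at ht
        have h1 : HasDerivAt (fun x => C*x) C t := by
          simpa using (hasDerivAt_id t).const_mul C
        have h2 : HasDerivAt (fun x' => g x' θ) (deriv (fun x' => g x' θ) t) t :=
          (hgd t).hasDerivAt
        rw [(h1.fun_sub h2).deriv]
        have := hDbound θ hθ hle t ⟨ht.1.le, le_trans ht.2.le hz.2⟩
        linarith
    have := hmono2 (left_mem_Icc.2 hz.1) (right_mem_Icc.2 hz.1) hz.1
    simp only [mul_zero] at this
    linarith
  have hdifflb : ∀ z ∈ Icc (0:ℝ) 1, -(C * z) ≤ g z θ1 - g 0 θ1 := by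
    intro z hz
    have hgd : Differentiable ℝ (fun x' => g x' θ1) := (aux_cd_left hg2 θ1).differentiable two_ne_zero
    have hmono2 : MonotoneOn (fun x => C*x + g x θ1) (Icc 0 z) := by
      apply monotoneOn_of_deriv_nonneg (convex_Icc _ _)
      · exact ((continuous_const.mul continuous_id).add hgd.continuous).continuousOn
      · exact (((differentiable_id.const_mul C).add hgd).differentiableOn)
      · intro t ht
        rw [interior_Icc] at ht
        have h1 : HasDerivAt (fun x => C*x) C t := by
          simpa using (hasDerivAt_id t).const_mul C
        have h2 : HasDerivAt (fun x' => g x' θ1) (deriv (fun x' => g x' θ1) t) t :=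
          (hgd t).hasDerivAt
        rw [(h1.fun_add h2).deriv]
        have := hDlow t ⟨ht.1.le, le_trans ht.2.le hz.2⟩
        simp only [hD] at this
        linarith
    have := hmono2 (left_mem_Icc.2 hz.1) (right_mem_Icc.2 hz.1) hz.1
    simp only [mul_zero] at this
    linarith
  -- key: gDualV at 0 is nonnegative
  have hw0 : ((0:ℝ):EReal) ≤ gDualV Θ g v 0 := by
    by_contra hc
    push_neg at hc
    obtain ⟨y, hy1, hy2⟩ := EReal.exists_between_coe_real hc
    have hyneg : y < 0 := by exact_mod_cast hy2
    set ε := -y with hε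
    have hε0 : 0 < ε := by linarith
    have husc1 := husc θ1 (hSsub hθ1S) 0 self_mem_Ici
    have hf0 : (g (0:ℝ) θ1 : EReal) - ψ 0 < ((g 0 θ1 + ε/4 : ℝ) : EReal) := by
      rw [hψ0, sub_zero]
      exact_mod_cast (by linarith : g 0 θ1 < g 0 θ1 + ε/4)
    have hev := husc1 _ hf0
    rw [eventually_nhdsWithin_iff, Metric.eventually_nhds_iff] at hev
    obtain ⟨δ', hδ'0, hδ'⟩ := hev
    set δ := min (X θ1) (min 1 (min δ' (ε/(4*C+1)))) with hδ
    have hδ0 : 0 < δ := lt_min (hXpos θ1 hθ1S) (lt_min one_pos (lt_min hδ'0 (by positivity)))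
    have hinflt : sInf (X '' S) < δ := by rw [hXinf]; exact hδ0
    obtain ⟨z', ⟨τ, hτS, rfl⟩, hz'lt⟩ :=
      exists_lt_of_csInf_lt ⟨X θ1, mem_image_of_mem _ hθ1S⟩ hinflt
    set z := X τ with hz
    have hz0 : 0 < z := hXpos τ hτS
    have hτθ1 : τ ≤ θ1 := by
      by_contra hcc
      push_neg at hcc
      have hm := hXmono hθ1S hτS hcc.le
      have hd1 : z < X θ1 := lt_of_lt_of_le hz'lt (min_le_left _ _)
      linarith
    have hz1 : z ≤ 1 := le_trans hz'lt.le ((min_le_right _ _).trans (min_le_left _ _))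
    have hzδ' : z < δ' :=
      lt_of_lt_of_le hz'lt ((min_le_right _ _).trans ((min_le_right _ _).trans (min_le_left _ _)))
    have hzε : z ≤ ε/(4*C+1) :=
      le_trans hz'lt.le ((min_le_right _ _).trans ((min_le_right _ _).trans (min_le_right _ _)))
    have hzsub := hX τ hτS
    have hψz : ψ z = (((g z τ - v τ : ℝ)) : EReal) :=
      (hmain τ hτS z hzsub).trans (aux_gSubdiff_eval hzsub)
    set r := g z τ - v τ with hr
    have husczr : g z θ1 - r < g 0 θ1 + ε/4 := by
      have h5 := hδ' (show dist z 0 < δ' by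
          rw [Real.dist_eq, sub_zero, abs_of_pos hz0]; exact hzδ') (mem_Ici.2 hz0.le)
      have h6 : (g z θ1 : EReal) - ψ z < ((g 0 θ1 + ε/4 : ℝ) : EReal) := h5
      rw [hψz, ← EReal.coe_sub] at h6
      exact_mod_cast h6
    have hlow : -(C*z) ≤ g z θ1 - g 0 θ1 := hdifflb z ⟨hz0.le, hz1⟩
    have hub : g z τ - g 0 τ ≤ C * z := hdiffub τ (hSsub hτS) hτθ1 z ⟨hz0.le, hz1⟩
    have hkey : y < g 0 τ - v τ := by
      have h4 : (4*C+1) * z ≤ ε := by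
        have h := (le_div_iff₀ (by positivity : (0:ℝ) < 4*C+1)).mp hzε
        nlinarith [h]
      have heq2 : g 0 τ - v τ = r - (g z τ - g 0 τ) := by rw [hr]; ring
      rw [heq2]
      nlinarith [hz0.le, hC0]
    have hge : (((g 0 τ - v τ : ℝ)) : EReal) ≤ gDualV Θ g v 0 := aux_le_gDualV g v (hSsub hτS) 0
    have hcon2 : (y : EReal) < gDualV Θ g v 0 :=
      lt_of_lt_of_le (by exact_mod_cast hkey) hge
    exact absurd hy1 (not_lt.2 hcon2.le)
  have h1 : ψ 0 ≤ gDualV Θ g v 0 := by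
    rw [hψ0]
    simpa using hw0
  exact le_antisymm h1 (hwψ 0 (le_refl 0))
end
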